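/- Let α > 0 and x > 1. Then ∑_{n=1}^∞ (1 + (n−1)x^{−α})(1 − x^{−α})^{n−1} = 2x^α − 1 < ∞. Consequently, for any sequence (X_n)_{n≥1} of real random variables on a probability space (Ω, ℙ) such that ℙ(|X_n| < x) = (1 + (n−1)x^{−α})(1 − x^{−α})^{n−1} for each n (i.e. |X_n| is distributed as the n-fold Kendall convolution power δ_1^{△_α n}), one has ℙ(limsup_n {|X_n| < x}) = 0; in particular the Kendall random walk with unit step δ̃_1 is not recurrent. -/
import Mathlib

set_option maxHeartbeats 1000000


open MeasureTheory Set

/-- For `α > 0` and `x > 1`, `∑_{n=1}^∞ (1 + (n-1)x^(-α))(1 - x^(-α))^(n-1) = 2x^α - 1 < ∞`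
(here the sum is reindexed by `n ∈ ℕ`, `n ↦ n+1`).  Consequently, if `(X_n)_{n≥1}` are real
random variables with `ℙ(|X_n| < x) = (1 + (n-1)x^(-α))(1 - x^(-α))^(n-1)`, i.e. `|X_n|` is
distributed as the `n`-fold Kendall convolution power `δ_1^{△_α n}`, then
`ℙ(limsup_n {|X_n| < x}) = 0`; in particular the Kendall random walk with unit step `δ̃₁`
is not recurrent. -/
theorem kendall_walk_not_recurrent
    (α x : ℝ) (hα : 0 < α) (hx : 1 < x) :
    Summable (fun n : ℕ => (1 + (n : ℝ) * x ^ (-α)) * (1 - x ^ (-α)) ^ n)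
    ∧ ∑' n : ℕ, (1 + (n : ℝ) * x ^ (-α)) * (1 - x ^ (-α)) ^ n = 2 * x ^ α - 1
    ∧ ∀ (Ω : Type) (_ : MeasurableSpace Ω) (ℙ : Measure Ω), IsProbabilityMeasure ℙ →
        ∀ X : ℕ → Ω → ℝ,
          (∀ n : ℕ, 1 ≤ n →
            ℙ {ω | |X n ω| < x}
              = ENNReal.ofReal ((1 + ((n : ℝ) - 1) * x ^ (-α)) * (1 - x ^ (-α)) ^ (n - 1))) →
          ℙ (⋂ n : ℕ, ⋃ k : ℕ, ⋃ _ : n ≤ k, {ω | |X k ω| < x}) = 0 := by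
  set r : ℝ := x ^ (-α) with hr
  have hx0 : (0 : ℝ) < x := by linarith
  have hr0 : 0 < r := Real.rpow_pos_of_pos hx0 _
  have hr1 : r < 1 := Real.rpow_lt_one_of_one_lt_of_neg hx (by linarith)
  have hnorm : ‖(1 - r : ℝ)‖ < 1 := by
    rw [Real.norm_eq_abs, abs_lt]; constructor <;> linarith
  have hgeo : Summable (fun n : ℕ => (1 - r) ^ n) :=
    summable_geometric_of_lt_one (by linarith) (by linarith)
  have hmulg : Summable (fun n : ℕ => (n : ℝ) * (1 - r) ^ n) :=
    (hasSum_coe_mul_geometric_of_norm_lt_one hnorm).summable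
  have hfun : (fun n : ℕ => (1 + (n : ℝ) * r) * (1 - r) ^ n)
      = fun n : ℕ => (1 - r) ^ n + r * ((n : ℝ) * (1 - r) ^ n) := by
    funext n; ring
  have hS : Summable (fun n : ℕ => (1 + (n : ℝ) * r) * (1 - r) ^ n) := by
    rw [hfun]; exact hgeo.add (hmulg.mul_left r)
  have hxα : x ^ α = r⁻¹ := by
    rw [hr, ← Real.rpow_neg hx0.le, neg_neg]
  have htsum : ∑' n : ℕ, (1 + (n : ℝ) * r) * (1 - r) ^ n = 2 * x ^ α - 1 := by
    rw [hfun]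
    rw [Summable.tsum_add hgeo (hmulg.mul_left r), tsum_mul_left,
      tsum_geometric_of_lt_one (by linarith) (by linarith),
      tsum_coe_mul_geometric_of_norm_lt_one hnorm, hxα]
    have : (1 : ℝ) - (1 - r) = r := by ring
    rw [this]
    field_simp
    ring
  refine ⟨hS, htsum, ?_⟩
  intro Ω _ ℙ hℙ X hX
  have key : ℙ (Filter.limsup (fun k => {ω | |X k ω| < x}) Filter.atTop) = 0 := by
    apply measure_limsup_atTop_eq_zero
    have h1 : ∀ n : ℕ, ℙ {ω | |X (n + 1) ω| < x}
        = ENNReal.ofReal ((1 + (n : ℝ) * r) * (1 - r) ^ n) := by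
      intro n
      have := hX (n + 1) (Nat.le_add_left 1 n)
      simpa using this
    have hsplit : ∑' k : ℕ, ℙ {ω | |X k ω| < x}
        = ℙ {ω | |X 0 ω| < x} + ∑' n : ℕ, ℙ {ω | |X (n + 1) ω| < x} :=
      tsum_eq_zero_add' ENNReal.summable
    rw [hsplit]
    have h2 : ∑' n : ℕ, ℙ {ω | |X (n + 1) ω| < x}
        = ENNReal.ofReal (∑' n : ℕ, (1 + (n : ℝ) * r) * (1 - r) ^ n) := by
      rw [ENNReal.ofReal_tsum_of_nonneg (fun n => mul_nonneg (by nlinarith [Nat.cast_nonneg (α := ℝ) n]) (pow_nonneg (by linarith) n)) hS]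
      exact tsum_congr h1
    rw [h2]
    exact ENNReal.add_ne_top.mpr ⟨(measure_lt_top ℙ _).ne, ENNReal.ofReal_ne_top⟩
  have : Filter.limsup (fun k => {ω : Ω | |X k ω| < x}) Filter.atTop
      = ⋂ n : ℕ, ⋃ k : ℕ, ⋃ _ : n ≤ k, {ω | |X k ω| < x} := by
    rw [Filter.limsup_eq_iInf_iSup_of_nat]
    simp only [iInf_eq_iInter, iSup_eq_iUnion]
  rwa [this] at key
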